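/- If f_1 and f_2 are dual feasible functions and rectangles (l_1,w_1),...,(l_m,w_m) with l_i, w_i ∈ [0,1] can be packed without overlap (axis-parallel, no rotation) into the unit square, then Σ_{i=1}^m f_1(l_i)·f_2(w_i) ≤ 1. -/

import Mathlib

open MeasureTheory

/-- A function `f : [0,1] → [0,1]` is dual feasible if `Σ f (x i) ≤ 1` whenever the
`x i` lie in `[0,1]` and `Σ x i ≤ 1`. -/
def DualFeasible (f : ℝ → ℝ) : Prop :=
  (∀ x ∈ Set.Icc (0 : ℝ) 1, f x ∈ Set.Icc (0 : ℝ) 1) ∧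
  ∀ (n : ℕ) (x : Fin n → ℝ), (∀ i, x i ∈ Set.Icc (0 : ℝ) 1) → (∑ i, x i) ≤ 1 →
    (∑ i, f (x i)) ≤ 1

/-- A dual feasible function vanishes at 0. -/
lemma DualFeasible.zero {f : ℝ → ℝ} (hf : DualFeasible f) : f 0 = 0 := by
  have h0 : 0 ≤ f 0 := (hf.1 0 (by constructor <;> norm_num)).1
  by_contra h
  have hpos : 0 < f 0 := lt_of_le_of_ne h0 (fun h' => h h'.symm)
  obtain ⟨n, hn⟩ := exists_nat_gt (1 / f 0)
  have := hf.2 n (fun _ => 0) (fun _ => by constructor <;> norm_num)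
    (by simp)
  simp only [Finset.sum_const, Finset.card_univ, Fintype.card_fin, nsmul_eq_mul] at this
  have h1 : (1:ℝ) < n * f 0 := (div_lt_iff₀ hpos).mp hn
  linarith

/-- Dual feasibility applied to a sum over an arbitrary finite set. -/
lemma DualFeasible.finset_sum {f : ℝ → ℝ} (hf : DualFeasible f) {ι : Type*}
    (s : Finset ι) (x : ι → ℝ) (hx : ∀ i ∈ s, x i ∈ Set.Icc (0 : ℝ) 1)
    (hs : ∑ i ∈ s, x i ≤ 1) : ∑ i ∈ s, f (x i) ≤ 1 := by
  classical
  have e : {i // i ∈ s} ≃ Fin s.card := s.equivFin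
  have h1 : ∑ i ∈ s, x i = ∑ j : Fin s.card, x (e.symm j).1 := by
    rw [← Finset.sum_coe_sort s x]
    exact (Equiv.sum_comp e.symm (fun i : {i // i ∈ s} => x i.1)).symm
  have h2 : ∑ i ∈ s, f (x i) = ∑ j : Fin s.card, f (x (e.symm j).1) := by
    rw [← Finset.sum_coe_sort s (fun i => f (x i))]
    exact (Equiv.sum_comp e.symm (fun i : {i // i ∈ s} => f (x i.1))).symm
  rw [h2]
  exact hf.2 s.card (fun j => x (e.symm j).1)
    (fun j => hx _ (e.symm j).2) (h1 ▸ hs)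

/-- Pairwise disjoint open subintervals of `[0,1]` have total length at most 1. -/
lemma sum_length_le_one {ι : Type*} (s : Finset ι) (a l : ι → ℝ)
    (hl : ∀ i ∈ s, 0 ≤ l i) (hsub : ∀ i ∈ s, 0 ≤ a i ∧ a i + l i ≤ 1)
    (hd : ∀ i ∈ s, ∀ j ∈ s, i ≠ j →
      Set.Ioo (a i) (a i + l i) ∩ Set.Ioo (a j) (a j + l j) = ∅) :
    ∑ i ∈ s, l i ≤ 1 := by
  classical
  have hdisj : Set.PairwiseDisjoint (↑s) (fun i => Set.Ioo (a i) (a i + l i)) := by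
    intro i hi j hj hij
    rw [Function.onFun, Set.disjoint_iff_inter_eq_empty]
    exact hd i hi j hj hij
  have hmeas : ∀ i ∈ s, MeasurableSet (Set.Ioo (a i) (a i + l i)) :=
    fun i _ => measurableSet_Ioo
  have key : ∑ i ∈ s, volume (Set.Ioo (a i) (a i + l i)) ≤ 1 := by
    rw [← measure_biUnion_finset hdisj hmeas]
    have : (⋃ i ∈ s, Set.Ioo (a i) (a i + l i)) ⊆ Set.Icc (0 : ℝ) 1 := by
      intro x hx
      simp only [Set.mem_iUnion] at hx
      obtain ⟨i, hi, hx⟩ := hx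
      exact ⟨le_of_lt (lt_of_le_of_lt (hsub i hi).1 hx.1),
        le_of_lt (lt_of_lt_of_le hx.2 (hsub i hi).2)⟩
    calc volume (⋃ i ∈ s, Set.Ioo (a i) (a i + l i)) ≤ volume (Set.Icc (0:ℝ) 1) :=
          measure_mono this
      _ = 1 := by rw [Real.volume_Icc]; norm_num
  have : ∑ i ∈ s, volume (Set.Ioo (a i) (a i + l i)) = ENNReal.ofReal (∑ i ∈ s, l i) := by
    rw [ENNReal.ofReal_sum_of_nonneg hl]
    refine Finset.sum_congr rfl (fun i hi => ?_)
    rw [Real.volume_Ioo]; ring_nf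
  rw [this] at key
  exact ENNReal.ofReal_le_one.mp key

/-- In a measurable subset of `[0,1)` of measure at least `r`, one can find a
measurable subset of measure exactly `r`. -/
lemma exists_subset_volume_eq {S : Set ℝ} (hS : MeasurableSet S)
    (hS1 : S ⊆ Set.Ico (0:ℝ) 1) {r : ℝ} (h0 : 0 ≤ r)
    (hr : ENNReal.ofReal r ≤ volume S) :
    ∃ A, A ⊆ S ∧ MeasurableSet A ∧ volume A = ENNReal.ofReal r := by
  have hSfin : volume S ≤ 1 := by
    calc volume S ≤ volume (Set.Ico (0:ℝ) 1) := measure_mono hS1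
      _ = 1 := by rw [Real.volume_Ico]; norm_num
  have hSne : volume S ≠ ⊤ := ne_top_of_le_ne_top (by norm_num) hSfin
  set g : ℝ → ℝ := fun x => (volume (S ∩ Set.Iio x)).toReal with hg
  have hfin : ∀ x, volume (S ∩ Set.Iio x) ≠ ⊤ := fun x =>
    ne_top_of_le_ne_top hSne (measure_mono Set.inter_subset_left)
  have hmono : Monotone g := by
    intro x y hxy
    exact ENNReal.toReal_mono (hfin y)
      (measure_mono (Set.inter_subset_inter_right _ (Set.Iio_subset_Iio hxy)))
  have hlip : ∀ x y : ℝ, x ≤ y → g y - g x ≤ y - x := by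
    intro x y hxy
    have hsub : S ∩ Set.Iio y ⊆ (S ∩ Set.Iio x) ∪ Set.Ico x y := by
      intro t ht
      rcases lt_or_ge t x with h | h
      · exact Or.inl ⟨ht.1, h⟩
      · exact Or.inr ⟨h, ht.2⟩
    have : volume (S ∩ Set.Iio y) ≤ volume (S ∩ Set.Iio x) + ENNReal.ofReal (y - x) := by
      rw [← Real.volume_Ico]
      exact le_trans (measure_mono hsub) (measure_union_le _ _)
    have h2 := ENNReal.toReal_mono (by
      exact ENNReal.add_ne_top.mpr ⟨hfin x, ENNReal.ofReal_ne_top⟩) this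
    rw [ENNReal.toReal_add (hfin x) ENNReal.ofReal_ne_top,
      ENNReal.toReal_ofReal (by linarith)] at h2
    simpa [hg] using by linarith [h2]
  have hcont : Continuous g := by
    refine LipschitzWith.continuous (K := 1) (LipschitzWith.of_dist_le_mul ?_)
    intro x y
    rw [Real.dist_eq, Real.dist_eq]
    push_cast
    rw [one_mul]
    rcases le_total x y with h | h
    · rw [abs_sub_comm, abs_of_nonneg (by linarith [hmono h] : (0:ℝ) ≤ g y - g x),
        abs_sub_comm x y, abs_of_nonneg (by linarith)]
      exact hlip x y h
    · rw [abs_of_nonneg (by linarith [hmono h] : (0:ℝ) ≤ g x - g y),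
        abs_of_nonneg (by linarith)]
      exact hlip y x h
  have hg0 : g 0 = 0 := by
    have : S ∩ Set.Iio 0 = ∅ := by
      ext t; simp only [Set.mem_inter_iff, Set.mem_Iio, Set.mem_empty_iff_false,
        iff_false, not_and, not_lt]
      exact fun ht => (hS1 ht).1
    simp [hg, this]
  have hg1 : g 1 = (volume S).toReal := by
    have : S ∩ Set.Iio 1 = S := by
      apply Set.inter_eq_self_of_subset_left
      exact fun t ht => (hS1 ht).2
    simp [hg, this]
  have hrmem : r ∈ Set.Icc (g 0) (g 1) := by
    constructor
    · rw [hg0]; exact h0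
    · rw [hg1]
      exact (ENNReal.ofReal_le_iff_le_toReal hSne).mp hr
  obtain ⟨x, _, hx⟩ := intermediate_value_Icc (by norm_num : (0:ℝ) ≤ 1)
    hcont.continuousOn hrmem
  refine ⟨S ∩ Set.Iio x, Set.inter_subset_left, hS.inter measurableSet_Iio, ?_⟩
  rw [← hx]
  simp only [hg]
  rw [ENNReal.ofReal_toReal (hfin x)]

/-- Fractional coloring of intervals: given intervals `(b i, b i + w i)` with weights
`lam i ∈ [0,1]` forming a fractional packing (total weight at any point ≤ 1), there are
measurable sets `A i ⊆ [0,1)` with `volume (A i) = lam i`, disjoint whenever the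
corresponding intervals overlap. -/
lemma exists_good {m : ℕ} (b w lam : Fin m → ℝ)
    (hlam : ∀ i, lam i ∈ Set.Icc (0:ℝ) 1)
    (hpt : ∀ y : ℝ, ∑ i ∈ Finset.univ.filter (fun i => b i < y ∧ y < b i + w i), lam i ≤ 1) :
    ∀ s : Finset (Fin m), ∃ A : Fin m → Set ℝ,
      (∀ i ∈ s, MeasurableSet (A i) ∧ A i ⊆ Set.Ico (0:ℝ) 1 ∧
        volume (A i) = ENNReal.ofReal (lam i)) ∧
      (∀ i ∈ s, ∀ j ∈ s, i ≠ j →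
        (Set.Ioo (b i) (b i + w i) ∩ Set.Ioo (b j) (b j + w j)).Nonempty →
        Disjoint (A i) (A j)) := by
  classical
  intro s
  induction s using Finset.strongInduction with
  | _ s ih =>
    rcases s.eq_empty_or_nonempty with rfl | hne
    · exact ⟨fun _ => ∅, fun i hi => absurd hi (by simp), fun i hi => absurd hi (by simp)⟩
    obtain ⟨j, hjs, hjmax⟩ := s.exists_max_image b hne
    set s' := s.erase j with hs'
    have hss : s' ⊂ s := Finset.erase_ssubset hjs
    obtain ⟨A, hA1, hA2⟩ := ih s' hss
    set T := s'.filter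
      (fun i => (Set.Ioo (b i) (b i + w i) ∩ Set.Ioo (b j) (b j + w j)).Nonempty) with hT
    have hTs' : T ⊆ s' := Finset.filter_subset _ _
    -- total weight bound
    have hsum : lam j + ∑ i ∈ T, lam i ≤ 1 := by
      rcases T.eq_empty_or_nonempty with hTe | hTne
      · rw [hTe]; simpa using (hlam j).2
      · -- find a common point y
        have hTne' : (T.image (fun i => b i + w i)).Nonempty := hTne.image _
        set c : ℝ := min ((T.image (fun i => b i + w i)).min' hTne') (b j + w j) with hc
        have hbjc : b j < c := by
          rw [hc, lt_min_iff]
          constructor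
          · apply (Finset.lt_min'_iff _ _).mpr
            intro z hz
            rw [Finset.mem_image] at hz
            obtain ⟨i, hiT, rfl⟩ := hz
            obtain ⟨t, hti, htj⟩ := (Finset.mem_filter.mp hiT).2
            exact lt_trans htj.1 hti.2
          · obtain ⟨i, hiT⟩ := hTne
            obtain ⟨t, hti, htj⟩ := (Finset.mem_filter.mp hiT).2
            exact lt_trans htj.1 htj.2
        set y : ℝ := (b j + c) / 2 with hy
        have hy1 : b j < y := by rw [hy]; linarith
        have hy2 : y < c := by rw [hy]; linarith
        have hmem : insert j T ⊆ Finset.univ.filter (fun i => b i < y ∧ y < b i + w i) := by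
          intro i hi
          rw [Finset.mem_insert] at hi
          rw [Finset.mem_filter]
          refine ⟨Finset.mem_univ _, ?_⟩
          rcases hi with rfl | hiT
          · exact ⟨hy1, lt_of_lt_of_le hy2 (min_le_right _ _)⟩
          · have his : i ∈ s := Finset.mem_of_mem_erase (hTs' hiT)
            refine ⟨lt_of_le_of_lt (hjmax i his) hy1, ?_⟩
            calc y < c := hy2
              _ ≤ (T.image (fun i => b i + w i)).min' hTne' := min_le_left _ _
              _ ≤ b i + w i := Finset.min'_le _ _ (Finset.mem_image_of_mem _ hiT)
        have hjT : j ∉ T := fun h => (Finset.notMem_erase j s) (hTs' h)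
        calc lam j + ∑ i ∈ T, lam i = ∑ i ∈ insert j T, lam i :=
              (Finset.sum_insert hjT).symm
          _ ≤ ∑ i ∈ Finset.univ.filter (fun i => b i < y ∧ y < b i + w i), lam i :=
              Finset.sum_le_sum_of_subset_of_nonneg hmem (fun i _ _ => (hlam i).1)
          _ ≤ 1 := hpt y
    -- free space
    set U : Set ℝ := ⋃ i ∈ T, A i with hU
    have hUmeas : MeasurableSet U :=
      T.measurableSet_biUnion (fun i hi => (hA1 i (hTs' hi)).1)
    have hUvol : volume U ≤ ENNReal.ofReal (∑ i ∈ T, lam i) := by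
      calc volume U ≤ ∑ i ∈ T, volume (A i) := measure_biUnion_finset_le _ _
        _ = ∑ i ∈ T, ENNReal.ofReal (lam i) :=
            Finset.sum_congr rfl (fun i hi => (hA1 i (hTs' hi)).2.2)
        _ = ENNReal.ofReal (∑ i ∈ T, lam i) :=
            (ENNReal.ofReal_sum_of_nonneg (fun i _ => (hlam i).1)).symm
    have hUne : volume U ≠ ⊤ := ne_top_of_le_ne_top ENNReal.ofReal_ne_top hUvol
    set S : Set ℝ := Set.Ico (0:ℝ) 1 \ U with hS
    have hSmeas : MeasurableSet S := measurableSet_Ico.diff hUmeas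
    have hSsub : S ⊆ Set.Ico (0:ℝ) 1 := Set.diff_subset
    have hroom : ENNReal.ofReal (lam j) ≤ volume S := by
      have h1 : (1 : ENNReal) ≤ volume S + volume U := by
        have : Set.Ico (0:ℝ) 1 ⊆ S ∪ U := fun t ht => by
          by_cases h : t ∈ U
          · exact Or.inr h
          · exact Or.inl ⟨ht, h⟩
        calc (1 : ENNReal) = volume (Set.Ico (0:ℝ) 1) := by rw [Real.volume_Ico]; norm_num
          _ ≤ volume (S ∪ U) := measure_mono this
          _ ≤ volume S + volume U := measure_union_le _ _
      have h2 : ENNReal.ofReal (lam j) + volume U ≤ volume S + volume U := by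
        calc ENNReal.ofReal (lam j) + volume U
            ≤ ENNReal.ofReal (lam j) + ENNReal.ofReal (∑ i ∈ T, lam i) := by
              exact add_le_add (le_refl _) hUvol
          _ = ENNReal.ofReal (lam j + ∑ i ∈ T, lam i) :=
              (ENNReal.ofReal_add (hlam j).1
                (Finset.sum_nonneg (fun i _ => (hlam i).1))).symm
          _ ≤ 1 := ENNReal.ofReal_le_one.mpr hsum
          _ ≤ volume S + volume U := h1
      exact ENNReal.le_of_add_le_add_right hUne h2
    obtain ⟨Aj, hAjS, hAjmeas, hAjvol⟩ :=
      exists_subset_volume_eq hSmeas hSsub (hlam j).1 hroom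
    refine ⟨Function.update A j Aj, ?_, ?_⟩
    · intro i hi
      by_cases h : i = j
      · subst h
        rw [Function.update_self]
        exact ⟨hAjmeas, hAjS.trans hSsub, hAjvol⟩
      · rw [Function.update_of_ne h]
        exact hA1 i (Finset.mem_erase.mpr ⟨h, hi⟩)
    · intro i hi k hk hik hover
      by_cases hij : i = j
      · have hkj : k ≠ j := fun h => hik (hij.trans h.symm)
        rw [hij] at hover ⊢
        rw [Function.update_self, Function.update_of_ne hkj]
        have hkT : k ∈ T := by
          rw [hT, Finset.mem_filter]
          exact ⟨Finset.mem_erase.mpr ⟨hkj, hk⟩, by rwa [Set.inter_comm] at hover⟩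
        rw [Set.disjoint_left]
        intro t ht
        have : t ∈ S := hAjS ht
        exact fun htk => this.2 (Set.mem_biUnion hkT htk)
      · by_cases hkj : k = j
        · subst hkj
          rw [Function.update_self, Function.update_of_ne hij]
          have hiT : i ∈ T := by
            rw [hT, Finset.mem_filter]
            exact ⟨Finset.mem_erase.mpr ⟨hij, hi⟩, hover⟩
          rw [Set.disjoint_right]
          intro t ht
          have : t ∈ S := hAjS ht
          exact fun hti => this.2 (Set.mem_biUnion hiT hti)
        · rw [Function.update_of_ne hij, Function.update_of_ne hkj]
          exact hA2 i (Finset.mem_erase.mpr ⟨hij, hi⟩) k (Finset.mem_erase.mpr ⟨hkj, hk⟩)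
            hik hover

/-- Fractional interval packing bound for a dual feasible function. -/
lemma frac_pack {f : ℝ → ℝ} (hf : DualFeasible f) {m : ℕ} (b w lam : Fin m → ℝ)
    (hw : ∀ i, w i ∈ Set.Icc (0:ℝ) 1) (hb : ∀ i, 0 ≤ b i ∧ b i + w i ≤ 1)
    (hlam : ∀ i, lam i ∈ Set.Icc (0:ℝ) 1)
    (hpt : ∀ y : ℝ, ∑ i ∈ Finset.univ.filter (fun i => b i < y ∧ y < b i + w i), lam i ≤ 1) :
    ∑ i, lam i * f (w i) ≤ 1 := by
  classical
  obtain ⟨A, hA1, hA2⟩ := exists_good b w lam hlam hpt Finset.univ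
  simp only [Finset.mem_univ, forall_true_left, true_implies] at hA1 hA2
  have hfw : ∀ i, f (w i) ∈ Set.Icc (0:ℝ) 1 := fun i => hf.1 (w i) (hw i)
  -- pointwise bound
  have key : ∀ t : ℝ, ∑ i ∈ Finset.univ.filter (fun i => t ∈ A i), f (w i) ≤ 1 := by
    intro t
    set C := Finset.univ.filter (fun i => t ∈ A i) with hC
    have hdis : ∀ i ∈ C, ∀ j ∈ C, i ≠ j →
        Set.Ioo (b i) (b i + w i) ∩ Set.Ioo (b j) (b j + w j) = ∅ := by
      intro i hi j hj hij
      by_contra h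
      have hne : (Set.Ioo (b i) (b i + w i) ∩ Set.Ioo (b j) (b j + w j)).Nonempty :=
        Set.nonempty_iff_ne_empty.mpr h
      have := hA2 i j hij hne
      rw [Set.disjoint_left] at this
      exact this (Finset.mem_filter.mp hi).2 (Finset.mem_filter.mp hj).2
    have hsumw : ∑ i ∈ C, w i ≤ 1 :=
      sum_length_le_one C b w (fun i _ => (hw i).1) (fun i _ => hb i) hdis
    exact hf.finset_sum C w (fun i _ => hw i) hsumw
  -- integrate
  have hmain : ∑ i, ENNReal.ofReal (f (w i)) * volume (A i) ≤ 1 := by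
    have h1 : ∀ i : Fin m, ENNReal.ofReal (f (w i)) * volume (A i) =
        ∫⁻ t, (A i).indicator (fun _ => ENNReal.ofReal (f (w i))) t := by
      intro i
      rw [lintegral_indicator_const (hA1 i).1]
    calc ∑ i, ENNReal.ofReal (f (w i)) * volume (A i)
        = ∑ i, ∫⁻ t, (A i).indicator (fun _ => ENNReal.ofReal (f (w i))) t :=
          Finset.sum_congr rfl (fun i _ => h1 i)
      _ = ∫⁻ t, ∑ i, (A i).indicator (fun _ => ENNReal.ofReal (f (w i))) t :=
          (lintegral_finset_sum _ (fun i _ =>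
            (measurable_const.indicator (hA1 i).1))).symm
      _ ≤ ∫⁻ t, (Set.Ico (0:ℝ) 1).indicator (fun _ => (1:ENNReal)) t := by
          apply lintegral_mono
          intro t
          show ∑ i, (A i).indicator (fun _ => ENNReal.ofReal (f (w i))) t ≤
            (Set.Ico (0:ℝ) 1).indicator (fun _ => (1:ENNReal)) t
          by_cases ht : t ∈ Set.Ico (0:ℝ) 1
          · rw [Set.indicator_of_mem ht]
            have : ∑ i, (A i).indicator (fun _ => ENNReal.ofReal (f (w i))) t
                = ∑ i ∈ Finset.univ.filter (fun i => t ∈ A i),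
                    ENNReal.ofReal (f (w i)) := by
              rw [Finset.sum_filter]
              refine Finset.sum_congr rfl (fun i _ => ?_)
              by_cases h : t ∈ A i
              · rw [Set.indicator_of_mem h, if_pos h]
              · rw [Set.indicator_of_notMem h, if_neg h]
            rw [this, ← ENNReal.ofReal_sum_of_nonneg (fun i _ => (hfw i).1)]
            exact ENNReal.ofReal_le_one.mpr (key t)
          · have : ∀ i : Fin m, t ∉ A i := fun i h => ht ((hA1 i).2.1 h)
            rw [Set.indicator_of_notMem ht]
            simp only [Set.indicator_of_notMem (this _)]
            simp
      _ = volume (Set.Ico (0:ℝ) 1) := lintegral_indicator_const measurableSet_Ico 1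
            |>.trans (one_mul _)
      _ = 1 := by rw [Real.volume_Ico]; norm_num
  have : ENNReal.ofReal (∑ i, lam i * f (w i)) ≤ 1 := by
    rw [ENNReal.ofReal_sum_of_nonneg (fun i _ => mul_nonneg (hlam i).1 (hfw i).1)]
    calc ∑ i, ENNReal.ofReal (lam i * f (w i))
        = ∑ i, ENNReal.ofReal (f (w i)) * volume (A i) := by
          refine Finset.sum_congr rfl (fun i _ => ?_)
          rw [(hA1 i).2.2, ← ENNReal.ofReal_mul (hfw i).1, mul_comm (f (w i))]
      _ ≤ 1 := hmain
  exact ENNReal.ofReal_le_one.mp this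

/-- If `f₁, f₂` are dual feasible functions and rectangles `(l i, w i)` can be packed
axis-parallel without overlap into the unit square, then `Σ f₁(l i) * f₂(w i) ≤ 1`. -/
theorem dualFeasible_product_packing (f₁ f₂ : ℝ → ℝ)
    (hf₁ : DualFeasible f₁) (hf₂ : DualFeasible f₂)
    (m : ℕ) (l w a b : Fin m → ℝ)
    (hl : ∀ i, l i ∈ Set.Icc (0 : ℝ) 1) (hw : ∀ i, w i ∈ Set.Icc (0 : ℝ) 1)
    (hin : ∀ i, 0 ≤ a i ∧ a i + l i ≤ 1 ∧ 0 ≤ b i ∧ b i + w i ≤ 1)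
    (hdisj : ∀ i j, i ≠ j →
      (Set.Ioo (a i) (a i + l i) ×ˢ Set.Ioo (b i) (b i + w i)) ∩
        (Set.Ioo (a j) (a j + l j) ×ˢ Set.Ioo (b j) (b j + w j)) = ∅) :
    (∑ i, f₁ (l i) * f₂ (w i)) ≤ 1 := by
  classical
  have hb' : ∀ i, 0 ≤ b i ∧ b i + w i ≤ 1 := fun i => ⟨(hin i).2.2.1, (hin i).2.2.2⟩
  have hlam : ∀ i, f₁ (l i) ∈ Set.Icc (0:ℝ) 1 := fun i => hf₁.1 (l i) (hl i)
  have hpt : ∀ y : ℝ,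
      ∑ i ∈ Finset.univ.filter (fun i => b i < y ∧ y < b i + w i), f₁ (l i) ≤ 1 := by
    intro y
    set Sy := Finset.univ.filter (fun i => b i < y ∧ y < b i + w i) with hSy
    have hd : ∀ i ∈ Sy, ∀ j ∈ Sy, i ≠ j →
        Set.Ioo (a i) (a i + l i) ∩ Set.Ioo (a j) (a j + l j) = ∅ := by
      intro i hi j hj hij
      rw [Set.eq_empty_iff_forall_notMem]
      rintro x ⟨hxi, hxj⟩
      have hyi : y ∈ Set.Ioo (b i) (b i + w i) := (Finset.mem_filter.mp hi).2
      have hyj : y ∈ Set.Ioo (b j) (b j + w j) := (Finset.mem_filter.mp hj).2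
      have : (x, y) ∈ (Set.Ioo (a i) (a i + l i) ×ˢ Set.Ioo (b i) (b i + w i)) ∩
          (Set.Ioo (a j) (a j + l j) ×ˢ Set.Ioo (b j) (b j + w j)) :=
        ⟨⟨hxi, hyi⟩, ⟨hxj, hyj⟩⟩
      rw [hdisj i j hij] at this
      exact this
    have hsuml : ∑ i ∈ Sy, l i ≤ 1 :=
      sum_length_le_one Sy a l (fun i _ => (hl i).1)
        (fun i _ => ⟨(hin i).1, (hin i).2.1⟩) hd
    exact hf₁.finset_sum Sy l (fun i _ => hl i) hsuml
  have := frac_pack hf₂ b w (fun i => f₁ (l i)) hw hb' hlam hpt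
  simpa using this
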